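/- For the set A = {1, 2, 4, 5, 6, 7, 8, 9, 10} ⊆ {1, ..., 10} (so n = 5 and |A| = n + 4), there do not exist five distinct integers b₁, ..., b₅ with all ten pairwise sums in A; hence g₅(5) ≥ 5. -/
import Mathlib

lemma aux_mem (s : ℤ) (hs : s ∈ ({1, 2, 4, 5, 6, 7, 8, 9, 10} : Finset ℤ)) :
    1 ≤ s ∧ s ≤ 10 ∧ s ≠ 3 := by
  fin_cases hs <;> omega

lemma aux_main : ¬ ∃ b : Fin 5 → ℤ, Function.Injective b ∧
      ∀ i j : Fin 5, i < j →
        b i + b j ∈ ({1, 2, 4, 5, 6, 7, 8, 9, 10} : Finset ℤ) := by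
  rintro ⟨b, hb, hsum⟩
  have hsum' : ∀ i j : Fin 5, i ≠ j →
      b i + b j ∈ ({1, 2, 4, 5, 6, 7, 8, 9, 10} : Finset ℤ) := by
    intro i j hij
    rcases lt_or_gt_of_ne hij with h | h
    · exact hsum i j h
    · rw [add_comm]; exact hsum j i h
  set σ := Tuple.sort b with hσ
  set c : Fin 5 → ℤ := b ∘ σ with hc
  have hcmono : Monotone c := Tuple.monotone_sort b
  have hcinj : Function.Injective c := hb.comp σ.injective
  have hcs : StrictMono c := hcmono.strictMono_of_injective hcinj
  have key : ∀ i j : Fin 5, i ≠ j → 1 ≤ c i + c j ∧ c i + c j ≤ 10 ∧ c i + c j ≠ 3 := by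
    intro i j hij
    exact aux_mem _ (hsum' (σ i) (σ j) (fun h => hij (σ.injective h)))
  have h01 := key 0 1 (by decide)
  have h02 := key 0 2 (by decide)
  have h03 := key 0 3 (by decide)
  have h12 := key 1 2 (by decide)
  have h13 := key 1 3 (by decide)
  have h23 := key 2 3 (by decide)
  have h34 := key 3 4 (by decide)
  have l01 : c 0 < c 1 := hcs (by decide)
  have l12 : c 1 < c 2 := hcs (by decide)
  have l23 : c 2 < c 3 := hcs (by decide)
  have l34 : c 3 < c 4 := hcs (by decide)
  omega

theorem stmt_18 :
    (¬ ∃ b : Fin 5 → ℤ, Function.Injective b ∧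
      ∀ i j : Fin 5, i < j →
        b i + b j ∈ ({1, 2, 4, 5, 6, 7, 8, 9, 10} : Finset ℤ)) ∧
    (∀ g : ℕ,
      (∀ A : Finset ℤ, A ⊆ Finset.Icc 1 10 → 5 + g ≤ A.card →
        ∃ b : Fin 5 → ℤ, Function.Injective b ∧
          ∀ i j : Fin 5, i < j → b i + b j ∈ A) →
      5 ≤ g) := by
  constructor
  · exact aux_main
  · intro g hg
    by_contra hlt
    push_neg at hlt
    have hsub : ({1, 2, 4, 5, 6, 7, 8, 9, 10} : Finset ℤ) ⊆ Finset.Icc 1 10 := by decide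
    have hcard : 5 + g ≤ ({1, 2, 4, 5, 6, 7, 8, 9, 10} : Finset ℤ).card := by
      have : ({1, 2, 4, 5, 6, 7, 8, 9, 10} : Finset ℤ).card = 9 := by decide
      omega
    exact aux_main (hg _ hsub hcard)
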